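/- arXiv:2511.23275 — 2 statements merged into one kernel-verified Lean document; each statement's English description precedes it below -/
import Mathlib

section
/- Suppose Assumption A2 holds and p_θ is an exponential family with natural parameter η(θ) = θ, with the standing admissibility conditions (each ΔT_{i,j} := T_i ∘ M_j − T_i and ΔB_j := B ∘ M_j − B in L²(q0)). Let E ⊆ Θ be open and bounded. Then L̂_n(θ) → L(θ) almost surely as n → ∞, for every θ ∈ E. -/
open MeasureTheory Filter Topology ProbabilityTheory Matrix


lemma aux_poly_le_exp {c γ : ℝ} (hc : 0 < c) (hγ : 0 < γ) :
    ∃ K : ℝ, ∀ t : ℝ, 0 ≤ t → (1 + t ^ γ) ^ 2 ≤ K * Real.exp (c * t) := by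
  have hcont : Continuous fun t : ℝ => (1 + t ^ γ) ^ 2 * Real.exp (-c * t) := by
    have h1 : Continuous fun t : ℝ => t ^ γ := by
      rw [continuous_iff_continuousAt]
      intro x
      exact Real.continuousAt_rpow_const x γ (Or.inr hγ.le)
    continuity
  have h0 : Tendsto (fun t : ℝ => (1 + t ^ γ) ^ 2 * Real.exp (-c * t)) atTop (𝓝 0) := by
    have heq : ∀ᶠ t : ℝ in atTop, (Real.exp (-c*t) + 2 * (t ^ γ * Real.exp (-c*t))
        + t ^ (γ + γ) * Real.exp (-c*t)) = (1 + t ^ γ) ^ 2 * Real.exp (-c * t) := by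
      filter_upwards [eventually_gt_atTop (0:ℝ)] with t ht
      rw [Real.rpow_add ht]; ring
    have l1 : Tendsto (fun t : ℝ => Real.exp (-c*t)) atTop (𝓝 0) := by
      have := tendsto_rpow_mul_exp_neg_mul_atTop_nhds_zero 0 c hc
      refine this.congr' ?_
      filter_upwards [eventually_gt_atTop (0:ℝ)] with t ht
      rw [Real.rpow_zero, one_mul]
    have l2 := tendsto_rpow_mul_exp_neg_mul_atTop_nhds_zero γ c hc
    have l3 := tendsto_rpow_mul_exp_neg_mul_atTop_nhds_zero (γ+γ) c hc
    have := (l1.add ((l2.const_mul 2))).add l3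
    simp only [add_zero, mul_zero] at this
    exact Tendsto.congr' heq this
  have hev : ∀ᶠ t : ℝ in atTop, (1 + t ^ γ) ^ 2 * Real.exp (-c * t) ≤ 1 :=
    h0.eventually (eventually_le_nhds (by norm_num : (0:ℝ) < 1))
  obtain ⟨T, hT⟩ := hev.exists_forall_of_atTop
  obtain ⟨z, -, hK0⟩ := (isCompact_Icc (a := (0:ℝ)) (b := max T 0)).exists_isMaxOn
    (Set.nonempty_Icc.2 (le_max_right _ _)) hcont.continuousOn
  set g := fun t : ℝ => (1 + t ^ γ) ^ 2 * Real.exp (-c * t) with hg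
  refine ⟨max (g z) 1, fun t ht => ?_⟩
  have hexp : (0:ℝ) < Real.exp (c * t) := Real.exp_pos _
  have key : g t ≤ max (g z) 1 := by
    rcases le_or_gt t (max T 0) with h | h
    · exact le_max_of_le_left (hK0 ⟨ht, h⟩)
    · exact le_max_of_le_right (hT t ((le_max_left T 0).trans h.le))
  have : g t * Real.exp (c * t) = (1 + t ^ γ) ^ 2 := by
    rw [hg]; simp only [mul_assoc, ← Real.exp_add]; ring_nf
    rw [Real.exp_zero]; ring
  calc (1 + t ^ γ) ^ 2 = g t * Real.exp (c * t) := this.symm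
    _ ≤ max (g z) 1 * Real.exp (c * t) := mul_le_mul_of_nonneg_right key hexp.le

lemma aux_tendsto_zero_of_bounds (err S : ℕ → ℝ) (U δ : ℕ → ℕ → ℝ) (Kn : ℕ → ℝ)
    (t : ℕ → ℝ) (CH Kb : ℝ)
    (hbound : ∀ n k, |err n| ≤ δ n k * S n + Kn n * U k n)
    (hS : Tendsto S atTop (𝓝 CH))
    (hδ : ∀ k, Tendsto (fun n => δ n k) atTop (𝓝 0))
    (hU : ∀ k, Tendsto (fun n => U k n) atTop (𝓝 (t k)))
    (ht : Tendsto t atTop (𝓝 0))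
    (hKn : ∀ᶠ n in atTop, Kn n ≤ Kb) (hKn0 : ∀ n, 0 ≤ Kn n)
    (hU0 : ∀ k n, 0 ≤ U k n) (hS0 : ∀ n, 0 ≤ S n) (hδ0 : ∀ n k, 0 ≤ δ n k) :
    Tendsto err atTop (𝓝 0) := by
  have hCH : 0 ≤ CH := ge_of_tendsto hS (Eventually.of_forall hS0)
  have hKb : 0 ≤ Kb := by
    obtain ⟨n, h1, h2⟩ := (hKn.and (Eventually.of_forall hKn0)).exists
    exact h2.trans h1
  rw [NormedAddCommGroup.tendsto_nhds_zero]
  intro ε hε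
  have hCH1 : (0:ℝ) < CH + 1 := by linarith
  have hKb1 : (0:ℝ) < Kb + 1 := by linarith
  set ε₁ := ε / (4 * (Kb + 1)) with hε₁def
  have hε₁ : 0 < ε₁ := by positivity
  set ε₂ := ε / (2 * (CH + 1)) with hε₂def
  have hε₂ : 0 < ε₂ := by positivity
  -- choose k with |t k| < ε₁
  have : ∀ᶠ k in atTop, |t k| < ε₁ := by
    have := Metric.tendsto_nhds.mp ht ε₁ hε₁
    simpa [Real.dist_eq] using this
  obtain ⟨k, hk⟩ := this.exists
  filter_upwards [(hδ k).eventually (gt_mem_nhds hε₂),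
    hS.eventually (gt_mem_nhds (lt_add_one CH)),
    (hU k).eventually (gt_mem_nhds (show t k < t k + ε₁ by linarith)),
    hKn] with n h1 h2 h3 h4
  have hb := hbound n k
  have e1 : δ n k * S n < ε / 2 := by
    calc δ n k * S n ≤ δ n k * (CH + 1) := by
          apply mul_le_mul_of_nonneg_left h2.le (hδ0 n k)
      _ < ε₂ * (CH + 1) := by exact mul_lt_mul_of_pos_right h1 hCH1
      _ = ε / 2 := by rw [hε₂def]; field_simp
  have e2 : Kn n * U k n ≤ ε / 2 := by
    have hU' : U k n ≤ |t k| + ε₁ := by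
      have := h3
      have : U k n < t k + ε₁ := h3
      have : t k ≤ |t k| := le_abs_self _
      linarith [show U k n < t k + ε₁ from h3]
    calc Kn n * U k n ≤ Kb * U k n := mul_le_mul_of_nonneg_right h4 (hU0 k n)
      _ ≤ Kb * (|t k| + ε₁) := mul_le_mul_of_nonneg_left hU' hKb
      _ ≤ Kb * (ε₁ + ε₁) := by
          apply mul_le_mul_of_nonneg_left ?_ hKb
          linarith [hk.le]
      _ ≤ (Kb + 1) * (2 * ε₁) := by nlinarith
      _ = ε / 2 := by rw [hε₁def]; field_simp; norm_num
  calc ‖err n‖ = |err n| := rfl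
    _ ≤ δ n k * S n + Kn n * U k n := hb
    _ < ε := by linarith

lemma aux_slln {𝒳 : Type*} [Countable 𝒳] [MeasurableSpace 𝒳] [MeasurableSingletonClass 𝒳]
    {Ω : Type*} [MeasurableSpace Ω] (μ : Measure Ω) [IsProbabilityMeasure μ]
    (q0 : 𝒳 → ℝ) (hq0_nonneg : ∀ x, 0 ≤ q0 x)
    (X : ℕ → Ω → 𝒳) (hX_meas : ∀ i, Measurable (X i))
    (hX_dist : ∀ i x, μ (X i ⁻¹' {x}) = ENNReal.ofReal (q0 x))
    (hX_indep : iIndepFun X μ)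
    (f : 𝒳 → ℝ) (hf : Summable fun x => q0 x * |f x|) :
    ∀ᵐ ω ∂μ, Tendsto (fun n : ℕ => (n : ℝ)⁻¹ * ∑ i ∈ Finset.range n, f (X i ω)) atTop
      (𝓝 (∑' x, q0 x * f x)) := by
  have hfmeas : Measurable f := measurable_of_countable f
  have hident : ∀ i, IdentDistrib (X i) (X 0) μ μ := by
    intro i
    refine ⟨(hX_meas i).aemeasurable, (hX_meas 0).aemeasurable, ?_⟩
    refine Measure.ext_of_singleton fun x => ?_
    rw [Measure.map_apply (hX_meas i) (measurableSet_singleton x),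
      Measure.map_apply (hX_meas 0) (measurableSet_singleton x), hX_dist, hX_dist]
  have hmap : ∀ x : 𝒳, (μ.map (X 0)) {x} = ENNReal.ofReal (q0 x) := fun x => by
    rw [Measure.map_apply (hX_meas 0) (measurableSet_singleton x), hX_dist]
  have hint : Integrable (fun ω => f (X 0 ω)) μ := by
    have h1 : Integrable f (μ.map (X 0)) := by
      constructor
      · exact hfmeas.aestronglyMeasurable
      · rw [HasFiniteIntegral, lintegral_countable']
        have heq : ∀ x : 𝒳, ‖f x‖ₑ * (μ.map (X 0)) {x}
            = ENNReal.ofReal (q0 x * |f x|) := by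
          intro x
          rw [hmap x, ENNReal.ofReal_mul (hq0_nonneg x), mul_comm,
            Real.enorm_eq_ofReal_abs]
        rw [tsum_congr heq, ← ENNReal.ofReal_tsum_of_nonneg (fun x => mul_nonneg (hq0_nonneg x) (abs_nonneg _)) hf]
        exact ENNReal.ofReal_lt_top
    exact (integrable_map_measure hfmeas.aestronglyMeasurable (hX_meas 0).aemeasurable).mp h1
  have hexp : ∫ ω, f (X 0 ω) ∂μ = ∑' x, q0 x * f x := by
    rw [← integral_map (hX_meas 0).aemeasurable hfmeas.aestronglyMeasurable,
      integral_countable' ((integrable_map_measure hfmeas.aestronglyMeasurable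
        (hX_meas 0).aemeasurable).mpr hint)]
    refine tsum_congr fun x => ?_
    rw [measureReal_def, hmap x, smul_eq_mul, ENNReal.toReal_ofReal (hq0_nonneg x)]
  have hindep : Pairwise (Function.onFun (IndepFun · · μ) fun i ω => f (X i ω)) := by
    intro i j hij
    exact (hX_indep.indepFun hij).comp hfmeas hfmeas
  have := strong_law_ae (μ := μ) (fun i ω => f (X i ω)) hint hindep
    (fun i => (hident i).comp hfmeas)
  rw [hexp] at this
  filter_upwards [this] with ω hω
  simpa [smul_eq_mul] using hω

lemma aux_tail {𝒳 : Type*} (a : 𝒳 → ℝ) (ha : Summable a) (hnn : ∀ x, 0 ≤ a x)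
    (F : ℕ → Finset 𝒳) [∀ k x, Decidable (x ∈ F k)] (hmono : Monotone F)
    (hexh : ∀ x, ∃ k, x ∈ F k) :
    Tendsto (fun k => ∑' x, if x ∈ F k then 0 else a x) atTop (𝓝 0) := by
  have hFt : Tendsto F atTop atTop := by
    apply tendsto_atTop_finset_of_monotone hmono
    intro x; obtain ⟨k, hk⟩ := hexh x; exact ⟨k, hk⟩
  have hpart : Tendsto (fun k => ∑ x ∈ F k, a x) atTop (𝓝 (∑' x, a x)) :=
    ha.hasSum.comp hFt
  have heq : ∀ k, ∑' x, (if x ∈ F k then 0 else a x) = (∑' x, a x) - ∑ x ∈ F k, a x := by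
    intro k
    have hs1 : Summable (fun x => if x ∈ F k then a x else 0) :=
      summable_of_ne_finset_zero (s := F k) (fun x hx => if_neg hx)
    have hs2 : Summable (fun x => if x ∈ F k then 0 else a x) := by
      refine Summable.of_nonneg_of_le (fun x => by split <;> simp [hnn x]) (fun x => ?_) ha
      split <;> simp [hnn x]
    have hadd : ∀ x, (if x ∈ F k then a x else 0) + (if x ∈ F k then 0 else a x) = a x := by
      intro x; split <;> simp
    have := Summable.tsum_add hs1 hs2
    rw [tsum_congr hadd] at this
    have ht1 : ∑' x, (if x ∈ F k then a x else 0) = ∑ x ∈ F k, a x := by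
      rw [tsum_eq_sum (s := F k) (fun x hx => if_neg hx)]
      exact Finset.sum_congr rfl fun x hx => if_pos hx
    rw [ht1] at this
    linarith
  simp only [heq]
  have := (tendsto_const_nhds (x := ∑' x, a x) (f := atTop (α := ℕ))).sub hpart
  simpa using this

lemma aux_supp {𝒳 : Type*} [Countable 𝒳] [MeasurableSpace 𝒳] [MeasurableSingletonClass 𝒳]
    {Ω : Type*} [MeasurableSpace Ω] (μ : Measure Ω) [IsProbabilityMeasure μ]
    (q0 : 𝒳 → ℝ) (hq0_nonneg : ∀ x, 0 ≤ q0 x)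
    (X : ℕ → Ω → 𝒳) (hX_meas : ∀ i, Measurable (X i))
    (hX_dist : ∀ i x, μ (X i ⁻¹' {x}) = ENNReal.ofReal (q0 x)) :
    ∀ᵐ ω ∂μ, ∀ i, 0 < q0 (X i ω) := by
  rw [ae_all_iff]
  intro i
  have : {ω | ¬ 0 < q0 (X i ω)} = X i ⁻¹' {x | ¬ 0 < q0 x} := rfl
  rw [ae_iff, this]
  have hsub : X i ⁻¹' {x | ¬ 0 < q0 x} ⊆ ⋃ x ∈ {x : 𝒳 | ¬ 0 < q0 x}, X i ⁻¹' {x} := by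
    intro ω hω
    exact Set.mem_biUnion hω rfl
  refine le_antisymm ?_ zero_le
  refine le_trans (measure_mono hsub) ?_
  refine le_trans (measure_biUnion_le μ (Set.to_countable _) _) ?_
  have : ∀ x : {x : 𝒳 | ¬ 0 < q0 x}, μ (X i ⁻¹' {(x : 𝒳)}) = 0 := by
    rintro ⟨x, hx⟩
    rw [hX_dist]
    have : q0 x = 0 := le_antisymm (not_lt.mp hx) (hq0_nonneg x)
    simp [this]
  rw [tsum_congr this]
  simp

set_option maxHeartbeats 2000000

/-- Pointwise almost-sure convergence of the empirical LRM loss for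
exponential family models with natural parameter `η(θ) = θ`. Under Assumption A2 and the
standing admissibility conditions (each `ΔT_{i,j}` and `ΔB_j` in `L²(q0)`), for every open
bounded `E ⊆ Θ` and every `θ ∈ E`, `L̂_n(θ) → L(θ)` almost surely. -/
theorem lrm_loss_pointwise_convergence_exponential_family
    {𝒳 : Type*} [Countable 𝒳] [DecidableEq 𝒳] [MeasurableSpace 𝒳] [MeasurableSingletonClass 𝒳]
    {Ω : Type*} [MeasurableSpace Ω] (μ : Measure Ω) [IsProbabilityMeasure μ]
    {d : ℕ} (Θ : Set (Fin d → ℝ))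
    -- q0 is a PMF on 𝒳
    (q0 : 𝒳 → ℝ) (hq0_nonneg : ∀ x, 0 ≤ q0 x) (hq0_sum : ∑' x, q0 x = 1)
    -- matching set with M(x) ⊆ supp(q0) and |M(x)| = m < ∞
    (M : 𝒳 → Finset 𝒳) (m : ℕ) (hm : 0 < m) (hM_card : ∀ x, (M x).card = m)
    (hM_supp : ∀ x, ∀ x' ∈ M x, 0 < q0 x')
    -- q0 ∈ Q^adm_{q0}(𝒳)
    (hq0_adm : Summable fun x => q0 x * ∑ x' ∈ M x, (Real.log (q0 x' / q0 x)) ^ 2)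
    -- the exponential family model with natural parameter η(θ) = θ
    (T : 𝒳 → (Fin d → ℝ)) (B : 𝒳 → ℝ) (Z : (Fin d → ℝ) → ℝ) (hZ : ∀ θ ∈ Θ, 0 < Z θ)
    (pθ : (Fin d → ℝ) → 𝒳 → ℝ)
    (hmodel : ∀ θ ∈ Θ, ∀ x, pθ θ x = Real.exp (θ ⬝ᵥ T x + B x - Real.log (Z θ)))
    -- standing admissibility: ΔT_{i,j} ∈ L²(q0) and ΔB_j ∈ L²(q0)
    (hT_L2 : ∀ j, Summable fun x => q0 x * ∑ x' ∈ M x, (T x' j - T x j) ^ 2)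
    (hB_L2 : Summable fun x => q0 x * ∑ x' ∈ M x, (B x' - B x) ^ 2)
    -- i.i.d. observations from q0
    (X : ℕ → Ω → 𝒳)
    (hX_meas : ∀ i, Measurable (X i))
    (hX_dist : ∀ i x, μ (X i ⁻¹' {x}) = ENNReal.ofReal (q0 x))
    (hX_indep : iIndepFun X μ)
    -- the Laplace-smoothed estimator q̂_α with α > 0
    (α : ℝ) (hα : 0 < α)
    (qdag : 𝒳 → ℝ) (hqdag_nonneg : ∀ x, 0 ≤ qdag x) (hqdag_pos : ∀ x, 0 < q0 x → 0 < qdag x)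
    (Zdag : ℝ) (hZdag : HasSum qdag Zdag)
    (qhat : ℕ → Ω → 𝒳 → ℝ)
    (hqhat : ∀ n ω x, qhat n ω x =
      ((∑ i ∈ Finset.range n, if X i ω = x then (1 : ℝ) else 0) + α * qdag x)
        / ((n : ℝ) + α * Zdag))
    -- q̂_α ∈ Q^adm_{q0}(𝒳) almost surely
    (hqhat_adm : ∀ n, ∀ᵐ ω ∂μ,
      Summable fun x => q0 x * ∑ x' ∈ M x, (Real.log (qhat n ω x' / qhat n ω x)) ^ 2)
    -- Assumption A2
    (nrmX : 𝒳 → ℝ) (hnrmX : ∀ x, 0 ≤ nrmX x)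
    (hA2 : Finite 𝒳 ∨
      (Infinite 𝒳 ∧ (∃ c > (0 : ℝ), Summable fun x => q0 x * Real.exp (c * nrmX x)) ∧
        ∃ Kq0 > (0 : ℝ), ∃ γ > (1 : ℝ), ∃ Khat : ℕ → ℝ,
          (∀ n, 0 ≤ Khat n) ∧ IsBoundedUnder (· ≤ ·) atTop Khat ∧
          (∀ x, ∀ x' ∈ M x, |Real.log (q0 x' / q0 x)| ≤ Kq0 * (1 + nrmX x ^ γ)) ∧
          (∀ n ω x, ∀ x' ∈ M x,
            |Real.log (qhat n ω x' / qhat n ω x)| ≤ Khat n * (1 + nrmX x ^ γ))))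
    -- the population and empirical LRM losses
    (Lpop : (Fin d → ℝ) → ℝ)
    (hLpop : ∀ θ, Lpop θ = ∑' x, q0 x * ((1 / ((M x).card : ℝ)) *
      ∑ x' ∈ M x, ((Real.log (pθ θ x' / pθ θ x)) ^ 2
        - 2 * Real.log (pθ θ x' / pθ θ x) * Real.log (q0 x' / q0 x))))
    (Lhat : ℕ → Ω → (Fin d → ℝ) → ℝ)
    (hLhat : ∀ n ω θ, Lhat n ω θ = (1 / (n : ℝ)) * ∑ i ∈ Finset.range n,
      ((1 / ((M (X i ω)).card : ℝ)) * ∑ x' ∈ M (X i ω),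
        ((Real.log (pθ θ x' / pθ θ (X i ω))) ^ 2
          - 2 * Real.log (pθ θ x' / pθ θ (X i ω))
              * Real.log (qhat n ω x' / qhat n ω (X i ω)))))
    -- E ⊆ Θ is open and bounded
    (E : Set (Fin d → ℝ)) (hE_sub : E ⊆ Θ) (hE_open : IsOpen E)
    (hE_bounded : Bornology.IsBounded E) :
    -- conclusion: almost-sure pointwise convergence on E
    ∀ θ ∈ E, ∀ᵐ ω ∂μ, Tendsto (fun n => Lhat n ω θ) atTop (𝓝 (Lpop θ)) := by
  classical
  intro θ hθE
  have hθΘ : θ ∈ Θ := hE_sub hθE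
  have hm' : (0:ℝ) < (m:ℝ) := by exact_mod_cast hm
  have hq0_summable : Summable q0 := by
    by_contra h
    rw [tsum_eq_zero_of_not_summable h] at hq0_sum
    norm_num at hq0_sum
  -- the log-likelihood-ratio function
  obtain ⟨ℓ, hℓ⟩ : ∃ ℓ : 𝒳 → 𝒳 → ℝ, ∀ x' x, ℓ x' x = (θ ⬝ᵥ T x' + B x') - (θ ⬝ᵥ T x + B x) :=
    ⟨_, fun _ _ => rfl⟩
  have hlog : ∀ x x' : 𝒳, Real.log (pθ θ x' / pθ θ x) = ℓ x' x := by
    intro x x'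
    rw [hmodel θ hθΘ x', hmodel θ hθΘ x, ← Real.exp_sub, Real.log_exp, hℓ]
    ring
  obtain ⟨L0, hL0⟩ : ∃ L0 : 𝒳 → 𝒳 → ℝ, ∀ x' x, L0 x' x = Real.log (q0 x' / q0 x) :=
    ⟨_, fun _ _ => rfl⟩
  obtain ⟨g, hgdef⟩ : ∃ g : 𝒳 → ℝ, ∀ x, g x =
      (1/(m:ℝ)) * ∑ x' ∈ M x, ((ℓ x' x)^2 - 2 * ℓ x' x * L0 x' x) := ⟨_, fun _ => rfl⟩
  obtain ⟨H, hHdef⟩ : ∃ H : 𝒳 → ℝ, ∀ x, H x = (2/(m:ℝ)) * ∑ x' ∈ M x, |ℓ x' x| :=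
    ⟨_, fun _ => rfl⟩
  have hHnn : ∀ x, 0 ≤ H x := by
    intro x; rw [hHdef]; positivity
  -- summability of the squared log-ratios
  have hkey : ∀ x x' : 𝒳, (ℓ x' x)^2 ≤
      2*(∑ j, θ j^2) * (∑ j, (T x' j - T x j)^2) + 2*(B x' - B x)^2 := by
    intro x x'
    have hcs := Finset.sum_mul_sq_le_sq_mul_sq Finset.univ θ (fun j => T x' j - T x j)
    have hrepr : ℓ x' x = (∑ j, θ j * (T x' j - T x j)) + (B x' - B x) := by
      rw [hℓ]
      simp only [dotProduct, mul_sub]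
      rw [Finset.sum_sub_distrib]
      ring
    rw [hrepr]
    nlinarith [sq_nonneg ((∑ j, θ j * (T x' j - T x j)) - (B x' - B x))]
  have hSl2 : Summable (fun x => q0 x * ∑ x' ∈ M x, (ℓ x' x)^2) := by
    apply Summable.of_nonneg_of_le
      (fun x => mul_nonneg (hq0_nonneg x) (Finset.sum_nonneg fun _ _ => sq_nonneg _))
      (f := fun x => 2*(∑ j, θ j^2) * (∑ j, q0 x * ∑ x' ∈ M x, (T x' j - T x j)^2)
        + 2*(q0 x * ∑ x' ∈ M x, (B x' - B x)^2))
    · intro x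
      have step1 : q0 x * ∑ x' ∈ M x, (ℓ x' x)^2 ≤
          q0 x * ∑ x' ∈ M x, (2*(∑ j, θ j^2) * (∑ j, (T x' j - T x j)^2)
            + 2*(B x' - B x)^2) :=
        mul_le_mul_of_nonneg_left (Finset.sum_le_sum fun x' _ => hkey x x') (hq0_nonneg x)
      refine step1.trans (le_of_eq ?_)
      rw [Finset.sum_add_distrib, ← Finset.mul_sum (M x) _ (2*(∑ j, θ j^2)),
        ← Finset.mul_sum]
      have hswap : ∑ j, q0 x * ∑ x' ∈ M x, (T x' j - T x j)^2
          = q0 x * ∑ x' ∈ M x, ∑ j, (T x' j - T x j)^2 := by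
        rw [← Finset.mul_sum, Finset.sum_comm]
      rw [hswap]
      ring
    · exact (((summable_sum (fun j _ => hT_L2 j)).mul_left _).add (hB_L2.mul_left 2))
  have hSg : Summable (fun x => q0 x * |g x|) := by
    apply Summable.of_nonneg_of_le
      (fun x => mul_nonneg (hq0_nonneg x) (abs_nonneg _))
      (f := fun x => (2/(m:ℝ))*(q0 x * ∑ x' ∈ M x, (ℓ x' x)^2)
        + (1/(m:ℝ))*(q0 x * ∑ x' ∈ M x, (L0 x' x)^2))
    · intro x
      have hterm : ∀ x' ∈ M x, |(ℓ x' x)^2 - 2 * ℓ x' x * L0 x' x|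
          ≤ 2*(ℓ x' x)^2 + (L0 x' x)^2 := by
        intro x' _
        rw [abs_le]
        constructor <;> nlinarith [sq_nonneg (ℓ x' x - L0 x' x), sq_nonneg (ℓ x' x + L0 x' x)]
      have hgabs : |g x| ≤ (1/(m:ℝ)) * ∑ x' ∈ M x, (2*(ℓ x' x)^2 + (L0 x' x)^2) := by
        rw [hgdef]
        rw [abs_mul]
        rw [abs_of_nonneg (by positivity : (0:ℝ) ≤ 1/(m:ℝ))]
        refine mul_le_mul_of_nonneg_left ((Finset.abs_sum_le_sum_abs _ _).trans
          (Finset.sum_le_sum hterm)) (by positivity)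
      calc q0 x * |g x| ≤ q0 x * ((1/(m:ℝ)) * ∑ x' ∈ M x, (2*(ℓ x' x)^2 + (L0 x' x)^2)) :=
            mul_le_mul_of_nonneg_left hgabs (hq0_nonneg x)
        _ = (2/(m:ℝ))*(q0 x * ∑ x' ∈ M x, (ℓ x' x)^2)
            + (1/(m:ℝ))*(q0 x * ∑ x' ∈ M x, (L0 x' x)^2) := by
            rw [Finset.sum_add_distrib, ← Finset.mul_sum]
            ring
    · refine (hSl2.mul_left _).add ?_
      have hS0 : Summable (fun x => q0 x * ∑ x' ∈ M x, (L0 x' x)^2) := by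
        refine hq0_adm.congr fun x => ?_
        congr 1
        exact Finset.sum_congr rfl fun x' _ => by rw [hL0]
      exact hS0.mul_left _
  have hSH : Summable (fun x => q0 x * |H x|) := by
    apply Summable.of_nonneg_of_le
      (fun x => mul_nonneg (hq0_nonneg x) (abs_nonneg _))
      (f := fun x => q0 x + (1/(m:ℝ))*(q0 x * ∑ x' ∈ M x, (ℓ x' x)^2))
    · intro x
      have habs : |H x| = H x := abs_of_nonneg (hHnn x)
      have hterm : ∀ x' ∈ M x, |ℓ x' x| ≤ (1 + (ℓ x' x)^2)/2 := by
        intro x' _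
        nlinarith [sq_nonneg (|ℓ x' x| - 1), sq_abs (ℓ x' x)]
      have hH2 : H x ≤ (2/(m:ℝ)) * ((m + ∑ x' ∈ M x, (ℓ x' x)^2)/2) := by
        rw [hHdef]
        refine mul_le_mul_of_nonneg_left ?_ (by positivity)
        calc ∑ x' ∈ M x, |ℓ x' x| ≤ ∑ x' ∈ M x, (1 + (ℓ x' x)^2)/2 :=
              Finset.sum_le_sum hterm
          _ = ((M x).card + ∑ x' ∈ M x, (ℓ x' x)^2)/2 := by
              rw [← Finset.sum_div, Finset.sum_add_distrib, Finset.sum_const,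
                nsmul_eq_mul, mul_one]
          _ = (m + ∑ x' ∈ M x, (ℓ x' x)^2)/2 := by rw [hM_card]
      calc q0 x * |H x| = q0 x * H x := by rw [habs]
        _ ≤ q0 x * ((2/(m:ℝ)) * ((m + ∑ x' ∈ M x, (ℓ x' x)^2)/2)) :=
            mul_le_mul_of_nonneg_left hH2 (hq0_nonneg x)
        _ = q0 x + (1/(m:ℝ))*(q0 x * ∑ x' ∈ M x, (ℓ x' x)^2) := by
            field_simp
    · exact hq0_summable.add (hSl2.mul_left _)
  -- the error function
  obtain ⟨e, hedef⟩ : ∃ e : ℕ → Ω → 𝒳 → ℝ, ∀ n ω x, e n ω x =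
      (2/(m:ℝ)) * ∑ x' ∈ M x, ℓ x' x *
        (Real.log (qhat n ω x' / qhat n ω x) - L0 x' x) := ⟨_, fun _ _ _ => rfl⟩
  -- package of truncation data from Assumption A2
  obtain ⟨F, ψ, Kn, t, Kb, hψ0, hKn0, hKnb, hψsum, htdef, ht0, hbnd_out⟩ :
      ∃ (F : ℕ → Finset 𝒳) (ψ : ℕ → 𝒳 → ℝ) (Kn : ℕ → ℝ) (t : ℕ → ℝ) (Kb : ℝ),
        (∀ k x, 0 ≤ ψ k x) ∧ (∀ n, 0 ≤ Kn n) ∧ (∀ᶠ n in atTop, Kn n ≤ Kb) ∧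
        (∀ k, Summable fun x => q0 x * |ψ k x|) ∧
        (∀ k, t k = ∑' x, q0 x * ψ k x) ∧ Tendsto t atTop (𝓝 0) ∧
        (∀ k n ω x, x ∉ F k → |e n ω x| ≤ Kn n * ψ k x) := by
    rcases hA2 with hfin | ⟨hinf, ⟨c, hc, hsubexp⟩, Kq0, hKq0, γ, hγ, Khat, hKhat0, hKhatb,
      hlogq0, hlogqhat⟩
    · letI : Fintype 𝒳 := Fintype.ofFinite 𝒳
      refine ⟨fun _ => Finset.univ, fun _ _ => 0, fun _ => 0, fun _ => 0, 0,
        fun _ _ => le_refl _, fun _ => le_refl _, Eventually.of_forall fun _ => le_refl _,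
        fun k => by simpa using summable_zero, fun k => by simp, tendsto_const_nhds,
        fun k n ω x hx => absurd (Finset.mem_univ x) hx⟩
    · have hγ0 : (0:ℝ) < γ := by linarith
      obtain ⟨φ, hφdef⟩ : ∃ φ : 𝒳 → ℝ, ∀ x, φ x = (1 + nrmX x ^ γ) * H x := ⟨_, fun _ => rfl⟩
      have hrnn : ∀ x, (0:ℝ) ≤ 1 + nrmX x ^ γ := fun x =>
        add_nonneg zero_le_one (Real.rpow_nonneg (hnrmX x) γ)
      have hφnn : ∀ x, 0 ≤ φ x := by
        intro x
        rw [hφdef]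
        exact mul_nonneg (hrnn x) (hHnn x)
      obtain ⟨K, hK⟩ := aux_poly_le_exp hc hγ0
      have hSφ : Summable (fun x => q0 x * φ x) := by
        apply Summable.of_nonneg_of_le
          (fun x => mul_nonneg (hq0_nonneg x) (hφnn x))
          (f := fun x => (K/2)*(q0 x * Real.exp (c * nrmX x))
            + (2/(m:ℝ))*(q0 x * ∑ x' ∈ M x, (ℓ x' x)^2))
        · intro x
          have h1 : (1 + nrmX x ^ γ)^2 ≤ K * Real.exp (c * nrmX x) := hK _ (hnrmX x)
          have h2 : (H x)^2 ≤ (4/(m:ℝ)) * ∑ x' ∈ M x, (ℓ x' x)^2 := by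
            rw [hHdef]
            have hcs : (∑ x' ∈ M x, |ℓ x' x|)^2 ≤ (m:ℝ) * ∑ x' ∈ M x, |ℓ x' x|^2 := by
              have := sq_sum_le_card_mul_sum_sq (s := M x) (f := fun x' => |ℓ x' x|)
              rwa [hM_card] at this
            have hsq : ∑ x' ∈ M x, |ℓ x' x|^2 = ∑ x' ∈ M x, (ℓ x' x)^2 :=
              Finset.sum_congr rfl fun x' _ => sq_abs _
            rw [hsq] at hcs
            rw [mul_pow]
            calc (2/(m:ℝ))^2 * (∑ x' ∈ M x, |ℓ x' x|)^2
                ≤ (2/(m:ℝ))^2 * ((m:ℝ) * ∑ x' ∈ M x, (ℓ x' x)^2) :=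
                  mul_le_mul_of_nonneg_left hcs (by positivity)
              _ = (4/(m:ℝ)) * ∑ x' ∈ M x, (ℓ x' x)^2 := by
                  field_simp
                  ring
          have hstep : (1 + nrmX x ^ γ) * H x ≤
              (K * Real.exp (c * nrmX x) + (4/(m:ℝ)) * ∑ x' ∈ M x, (ℓ x' x)^2)/2 := by
            nlinarith [sq_nonneg ((1 + nrmX x ^ γ) - H x)]
          calc q0 x * φ x = q0 x * ((1 + nrmX x ^ γ) * H x) := by rw [hφdef]
            _ ≤ q0 x * ((K * Real.exp (c * nrmX x)
                + (4/(m:ℝ)) * ∑ x' ∈ M x, (ℓ x' x)^2)/2) :=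
                mul_le_mul_of_nonneg_left hstep (hq0_nonneg x)
            _ = (K/2)*(q0 x * Real.exp (c * nrmX x))
                + (2/(m:ℝ))*(q0 x * ∑ x' ∈ M x, (ℓ x' x)^2) := by ring
        · exact ((hsubexp.mul_left _).add (hSl2.mul_left _))
      have : Nonempty 𝒳 := hinf.nonempty
      obtain ⟨enum, henum⟩ := exists_surjective_nat 𝒳
      obtain ⟨b, hb⟩ := hKhatb
      rw [eventually_map] at hb
      obtain ⟨F', hF'⟩ : ∃ F' : ℕ → Finset 𝒳, ∀ k, F' k = (Finset.range k).image enum :=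
        ⟨_, fun _ => rfl⟩
      obtain ⟨ψ', hψ'⟩ : ∃ ψ' : ℕ → 𝒳 → ℝ, ∀ k x,
          ψ' k x = if x ∈ F' k then 0 else φ x := ⟨_, fun _ _ => rfl⟩
      have hψ'nn : ∀ k x, 0 ≤ ψ' k x := by
        intro k x
        rw [hψ']
        split
        · exact le_refl _
        · exact hφnn x
      have hψ'le : ∀ k x, ψ' k x ≤ φ x := by
        intro k x
        rw [hψ']
        split
        · exact hφnn x
        · exact le_refl _
      refine ⟨F', ψ', fun n => Khat n + Kq0, fun k => ∑' x, q0 x * ψ' k x, b + Kq0,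
        hψ'nn, fun n => add_nonneg (hKhat0 n) hKq0.le, ?_, ?_, fun k => rfl, ?_, ?_⟩
      · filter_upwards [hb] with n hn using add_le_add_left hn Kq0
      · intro k
        apply Summable.of_nonneg_of_le (fun x => mul_nonneg (hq0_nonneg x) (abs_nonneg _))
          (f := fun x => q0 x * φ x) _ hSφ
        intro x
        rw [abs_of_nonneg (hψ'nn k x)]
        exact mul_le_mul_of_nonneg_left (hψ'le k x) (hq0_nonneg x)
      · have heq : ∀ k, (∑' x, q0 x * ψ' k x)
            = ∑' x, (if x ∈ F' k then 0 else q0 x * φ x) := by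
          intro k
          refine tsum_congr fun x => ?_
          rw [hψ']
          split <;> simp
        simp only [heq]
        apply aux_tail _ hSφ (fun x => mul_nonneg (hq0_nonneg x) (hφnn x))
        · intro k k' hkk'
          rw [hF', hF']
          exact Finset.image_subset_image (Finset.range_subset_range.mpr hkk')
        · intro x
          obtain ⟨n, hn⟩ := henum x
          refine ⟨n+1, ?_⟩
          rw [hF']
          exact Finset.mem_image.mpr ⟨n, Finset.mem_range.mpr (Nat.lt_succ_self n), hn⟩
      · intro k n ω' x hx
        rw [hψ', if_neg hx]
        have hb1 : ∀ x' ∈ M x, |Real.log (qhat n ω' x' / qhat n ω' x) - L0 x' x|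
            ≤ (Khat n + Kq0) * (1 + nrmX x ^ γ) := by
          intro x' hx'
          calc |Real.log (qhat n ω' x' / qhat n ω' x) - L0 x' x|
              ≤ |Real.log (qhat n ω' x' / qhat n ω' x)| + |L0 x' x| := abs_sub _ _
            _ ≤ Khat n * (1 + nrmX x ^ γ) + Kq0 * (1 + nrmX x ^ γ) := by
                refine add_le_add (hlogqhat n ω' x x' hx') ?_
                rw [hL0]
                exact hlogq0 x x' hx'
            _ = (Khat n + Kq0) * (1 + nrmX x ^ γ) := by ring
        calc |e n ω' x| = |(2/(m:ℝ)) * ∑ x' ∈ M x, ℓ x' x *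
              (Real.log (qhat n ω' x' / qhat n ω' x) - L0 x' x)| := by rw [hedef]
          _ ≤ (2/(m:ℝ)) * ∑ x' ∈ M x, |ℓ x' x| * ((Khat n + Kq0) * (1 + nrmX x ^ γ)) := by
              rw [abs_mul, abs_of_nonneg (by positivity : (0:ℝ) ≤ 2/(m:ℝ))]
              refine mul_le_mul_of_nonneg_left ((Finset.abs_sum_le_sum_abs _ _).trans
                (Finset.sum_le_sum fun x' hx' => ?_)) (by positivity)
              rw [abs_mul]
              exact mul_le_mul_of_nonneg_left (hb1 x' hx') (abs_nonneg _)
          _ = (Khat n + Kq0) * φ x := by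
              rw [← Finset.sum_mul, hφdef, hHdef]
              ring
  -- almost sure events
  have hev1 : ∀ᵐ ω ∂μ, ∀ y : 𝒳, Tendsto
      (fun n : ℕ => (n:ℝ)⁻¹ * ∑ i ∈ Finset.range n, (if X i ω = y then (1:ℝ) else 0))
      atTop (𝓝 (q0 y)) := by
    rw [ae_all_iff]
    intro y
    have hsum : Summable (fun x => q0 x * |if x = y then (1:ℝ) else 0|) := by
      apply summable_of_ne_finset_zero (s := {y})
      intro x hx
      simp only [Finset.mem_singleton] at hx
      simp [hx]
    have := aux_slln μ q0 hq0_nonneg X hX_meas hX_dist hX_indep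
      (fun x => if x = y then (1:ℝ) else 0) hsum
    have htsum : (∑' x, q0 x * (if x = y then (1:ℝ) else 0)) = q0 y := by
      rw [tsum_eq_single y (fun x hx => by simp [hx])]
      simp
    rw [htsum] at this
    filter_upwards [this] with ω hω
    refine hω.congr fun n => ?_
    congr 1
  have hev2 := aux_supp μ q0 hq0_nonneg X hX_meas hX_dist
  have hev3 := aux_slln μ q0 hq0_nonneg X hX_meas hX_dist hX_indep g hSg
  have hev4 := aux_slln μ q0 hq0_nonneg X hX_meas hX_dist hX_indep H hSH
  have hev5 : ∀ᵐ ω ∂μ, ∀ k, Tendsto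
      (fun n : ℕ => (n:ℝ)⁻¹ * ∑ i ∈ Finset.range n, ψ k (X i ω)) atTop (𝓝 (t k)) := by
    rw [ae_all_iff]
    intro k
    have := aux_slln μ q0 hq0_nonneg X hX_meas hX_dist hX_indep (ψ k) (hψsum k)
    have habs : (∑' x, q0 x * ψ k x) = ∑' x, q0 x * |ψ k x| := by
      refine tsum_congr fun x => by rw [abs_of_nonneg (hψ0 k x)]
    rw [(htdef k).trans habs]
    simpa [abs_of_nonneg, hψ0] using this
  -- positivity of Zdag
  have hx0 : ∃ x0 : 𝒳, 0 < q0 x0 := by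
    by_contra h
    push_neg at h
    have : ∀ x, q0 x = 0 := fun x => le_antisymm (h x) (hq0_nonneg x)
    rw [tsum_congr this] at hq0_sum
    simp at hq0_sum
  have hZdpos : 0 < Zdag := by
    obtain ⟨x0, hx0'⟩ := hx0
    have h1 : qdag x0 ≤ Zdag := by
      rw [← hZdag.tsum_eq]
      exact Summable.le_tsum hZdag.summable x0 (fun j _ => hqdag_nonneg j)
    exact lt_of_lt_of_le (hqdag_pos x0 hx0') h1
  filter_upwards [hev1, hev2, hev3, hev4, hev5] with ω h1 h2 h3 h4 h5
  -- convergence of the smoothed estimator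
  have hqc : ∀ y, 0 < q0 y → Tendsto (fun n : ℕ => qhat n ω y) atTop (𝓝 (q0 y)) := by
    intro y hy
    have hnum : Tendsto (fun n : ℕ => (n:ℝ)⁻¹ *
        ∑ i ∈ Finset.range n, (if X i ω = y then (1:ℝ) else 0) + α * qdag y * (n:ℝ)⁻¹)
        atTop (𝓝 (q0 y)) := by
      have h2 : Tendsto (fun n : ℕ => α * qdag y * (n:ℝ)⁻¹) atTop (𝓝 0) := by
        simpa using tendsto_inv_atTop_nhds_zero_nat.const_mul (α * qdag y)
      simpa using (h1 y).add h2
    have hden : Tendsto (fun n : ℕ => 1 + α * Zdag * (n:ℝ)⁻¹) atTop (𝓝 1) := by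
      have h2 : Tendsto (fun n : ℕ => α * Zdag * (n:ℝ)⁻¹) atTop (𝓝 0) := by
        simpa using tendsto_inv_atTop_nhds_zero_nat.const_mul (α * Zdag)
      simpa using (tendsto_const_nhds (x := (1:ℝ))).add h2
    have hdiv := hnum.div hden one_ne_zero
    rw [div_one] at hdiv
    refine hdiv.congr' ?_
    filter_upwards [eventually_ge_atTop 1] with n hn
    have hn0 : (0:ℝ) < (n:ℝ) := by exact_mod_cast hn
    rw [hqhat]
    simp only [Pi.div_apply]
    field_simp
  have hqp : ∀ (n : ℕ) y, 0 < q0 y → 0 < qhat n ω y := by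
    intro n y hy
    rw [hqhat]
    apply div_pos
    · have hsge : (0:ℝ) ≤ ∑ i ∈ Finset.range n, (if X i ω = y then (1:ℝ) else 0) :=
        Finset.sum_nonneg fun i _ => by split <;> norm_num
      have := mul_pos hα (hqdag_pos y hy)
      linarith
    · have : (0:ℝ) ≤ (n:ℝ) := Nat.cast_nonneg n
      have := mul_pos hα hZdpos
      linarith
  -- Δ convergence
  have hΔ : ∀ x, 0 < q0 x → ∀ x' ∈ M x, Tendsto
      (fun n : ℕ => Real.log (qhat n ω x' / qhat n ω x) - L0 x' x) atTop (𝓝 0) := by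
    intro x hx x' hx'
    have hx'pos : 0 < q0 x' := hM_supp x x' hx'
    have hratio : Tendsto (fun n : ℕ => qhat n ω x' / qhat n ω x) atTop
        (𝓝 (q0 x' / q0 x)) := (hqc x' hx'pos).div (hqc x hx) (ne_of_gt hx)
    have hlogc : Tendsto (fun n : ℕ => Real.log (qhat n ω x' / qhat n ω x)) atTop
        (𝓝 (Real.log (q0 x' / q0 x))) :=
      ((Real.continuousAt_log (ne_of_gt (div_pos hx'pos hx))).tendsto).comp hratio
    have := hlogc.sub (tendsto_const_nhds (x := L0 x' x))
    rw [hL0, sub_self] at this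
    refine this.congr fun n => by rw [hL0]
  -- the finite-set error bound
  obtain ⟨δ, hδdef⟩ : ∃ δ : ℕ → ℕ → ℝ, ∀ n k, δ n k =
      ∑ x ∈ (F k).filter (fun x => 0 < q0 x), ∑ x' ∈ M x,
        |Real.log (qhat n ω x' / qhat n ω x) - L0 x' x| := ⟨_, fun _ _ => rfl⟩
  have hδ0 : ∀ n k, 0 ≤ δ n k := by
    intro n k; rw [hδdef]; positivity
  have hδto : ∀ k, Tendsto (fun n => δ n k) atTop (𝓝 0) := by
    intro k
    have h : Tendsto (fun n => ∑ x ∈ (F k).filter (fun x => 0 < q0 x), ∑ x' ∈ M x,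
        |Real.log (qhat n ω x' / qhat n ω x) - L0 x' x|) atTop
        (𝓝 (∑ x ∈ (F k).filter (fun x => 0 < q0 x), ∑ x' ∈ M x, (0:ℝ))) :=
      tendsto_finset_sum _ (fun x hxmem => tendsto_finset_sum _ (fun x' hx' => by
        simpa using (hΔ x (Finset.mem_filter.mp hxmem).2 x' hx').abs))
    simp only [Finset.sum_const_zero] at h
    exact h.congr fun n => (hδdef n k).symm
  -- pointwise bound on e
  have hbnd : ∀ n k x, 0 < q0 x → |e n ω x| ≤ δ n k * H x + Kn n * ψ k x := by
    intro n k x hxpos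
    by_cases hx : x ∈ F k
    · have hδle : ∀ x' ∈ M x, |Real.log (qhat n ω x' / qhat n ω x) - L0 x' x| ≤ δ n k := by
        intro x' hx'
        rw [hδdef]
        have hmem : x ∈ (F k).filter (fun x => 0 < q0 x) :=
          Finset.mem_filter.mpr ⟨hx, hxpos⟩
        calc |Real.log (qhat n ω x' / qhat n ω x) - L0 x' x|
            ≤ ∑ x'' ∈ M x, |Real.log (qhat n ω x'' / qhat n ω x) - L0 x'' x| :=
              Finset.single_le_sum
                (f := fun x'' => |Real.log (qhat n ω x'' / qhat n ω x) - L0 x'' x|)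
                (fun _ _ => abs_nonneg _) hx'
          _ ≤ ∑ y ∈ (F k).filter (fun x => 0 < q0 x), ∑ x'' ∈ M y,
              |Real.log (qhat n ω x'' / qhat n ω y) - L0 x'' y| :=
              Finset.single_le_sum
                (f := fun y => ∑ x'' ∈ M y, |Real.log (qhat n ω x'' / qhat n ω y) - L0 x'' y|)
                (fun _ _ => Finset.sum_nonneg fun _ _ => abs_nonneg _) hmem
      have hmain : |e n ω x| ≤ δ n k * H x := by
        calc |e n ω x| = |(2/(m:ℝ)) * ∑ x' ∈ M x, ℓ x' x *
              (Real.log (qhat n ω x' / qhat n ω x) - L0 x' x)| := by rw [hedef]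
          _ ≤ (2/(m:ℝ)) * ∑ x' ∈ M x, |ℓ x' x| * δ n k := by
              rw [abs_mul, abs_of_nonneg (by positivity : (0:ℝ) ≤ 2/(m:ℝ))]
              refine mul_le_mul_of_nonneg_left ((Finset.abs_sum_le_sum_abs _ _).trans
                (Finset.sum_le_sum fun x' hx' => ?_)) (by positivity)
              rw [abs_mul]
              exact mul_le_mul_of_nonneg_left (hδle x' hx') (abs_nonneg _)
          _ = δ n k * H x := by
              rw [← Finset.sum_mul, hHdef]
              ring
      have h2' : 0 ≤ Kn n * ψ k x := mul_nonneg (hKn0 n) (hψ0 k x)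
      linarith
    · have hout := hbnd_out k n ω x hx
      have h2' : 0 ≤ δ n k * H x := mul_nonneg (hδ0 n k) (hHnn x)
      linarith
  -- decomposition of the empirical loss
  have hdecomp : ∀ n : ℕ, Lhat n ω θ =
      ((n:ℝ)⁻¹ * ∑ i ∈ Finset.range n, g (X i ω))
      - ((n:ℝ)⁻¹ * ∑ i ∈ Finset.range n, e n ω (X i ω)) := by
    intro n
    have hterm : ∀ i : ℕ, (1/((M (X i ω)).card:ℝ)) * ∑ x' ∈ M (X i ω),
        ((Real.log (pθ θ x' / pθ θ (X i ω)))^2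
          - 2 * Real.log (pθ θ x' / pθ θ (X i ω))
            * Real.log (qhat n ω x' / qhat n ω (X i ω)))
        = g (X i ω) - e n ω (X i ω) := by
      intro i
      have hsum : ∑ x' ∈ M (X i ω), ((Real.log (pθ θ x' / pθ θ (X i ω)))^2
          - 2 * Real.log (pθ θ x' / pθ θ (X i ω))
            * Real.log (qhat n ω x' / qhat n ω (X i ω)))
          = ∑ x' ∈ M (X i ω), (((ℓ x' (X i ω))^2 - 2 * ℓ x' (X i ω) * L0 x' (X i ω))
            - 2 * (ℓ x' (X i ω) * (Real.log (qhat n ω x' / qhat n ω (X i ω))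
              - L0 x' (X i ω)))) := by
        refine Finset.sum_congr rfl fun x' _ => ?_
        rw [hlog, hL0]
        ring
      rw [hsum, hM_card, Finset.sum_sub_distrib, hgdef, hedef]
      have hpull : ∑ x' ∈ M (X i ω), 2 * (ℓ x' (X i ω) *
          (Real.log (qhat n ω x' / qhat n ω (X i ω)) - L0 x' (X i ω)))
          = 2 * ∑ x' ∈ M (X i ω), ℓ x' (X i ω) *
            (Real.log (qhat n ω x' / qhat n ω (X i ω)) - L0 x' (X i ω)) := by
        rw [Finset.mul_sum]
      rw [hpull]
      ring
    rw [hLhat]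
    calc (1/(n:ℝ)) * ∑ i ∈ Finset.range n, ((1/((M (X i ω)).card:ℝ)) * ∑ x' ∈ M (X i ω),
        ((Real.log (pθ θ x' / pθ θ (X i ω)))^2
          - 2 * Real.log (pθ θ x' / pθ θ (X i ω))
            * Real.log (qhat n ω x' / qhat n ω (X i ω))))
        = (n:ℝ)⁻¹ * ∑ i ∈ Finset.range n, (g (X i ω) - e n ω (X i ω)) := by
          rw [one_div]
          congr 1
          exact Finset.sum_congr rfl fun i _ => hterm i
      _ = ((n:ℝ)⁻¹ * ∑ i ∈ Finset.range n, g (X i ω))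
          - ((n:ℝ)⁻¹ * ∑ i ∈ Finset.range n, e n ω (X i ω)) := by
          rw [Finset.sum_sub_distrib, mul_sub]
  -- population loss identification
  have hpop : Lpop θ = ∑' x, q0 x * g x := by
    rw [hLpop]
    refine tsum_congr fun x => ?_
    congr 1
    rw [hgdef, hM_card]
    congr 1
    exact Finset.sum_congr rfl fun x' _ => by rw [hlog, hL0]
  -- error term tends to zero
  have herr : Tendsto (fun n : ℕ => (n:ℝ)⁻¹ * ∑ i ∈ Finset.range n, e n ω (X i ω))
      atTop (𝓝 0) := by
    apply aux_tendsto_zero_of_bounds _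
      (fun n : ℕ => (n:ℝ)⁻¹ * ∑ i ∈ Finset.range n, H (X i ω))
      (fun k n => (n:ℝ)⁻¹ * ∑ i ∈ Finset.range n, ψ k (X i ω)) δ Kn t
      (∑' x, q0 x * |H x|) Kb ?_ ?_ hδto h5 ht0 hKnb hKn0 ?_ ?_ hδ0
    · intro n k
      have hinv : (0:ℝ) ≤ (n:ℝ)⁻¹ := inv_nonneg.mpr (Nat.cast_nonneg n)
      calc |(n:ℝ)⁻¹ * ∑ i ∈ Finset.range n, e n ω (X i ω)|
          = (n:ℝ)⁻¹ * |∑ i ∈ Finset.range n, e n ω (X i ω)| := by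
            rw [abs_mul, abs_of_nonneg hinv]
        _ ≤ (n:ℝ)⁻¹ * ∑ i ∈ Finset.range n, |e n ω (X i ω)| :=
            mul_le_mul_of_nonneg_left (Finset.abs_sum_le_sum_abs _ _) hinv
        _ ≤ (n:ℝ)⁻¹ * ∑ i ∈ Finset.range n,
            (δ n k * H (X i ω) + Kn n * ψ k (X i ω)) :=
            mul_le_mul_of_nonneg_left
              (Finset.sum_le_sum fun i _ => hbnd n k _ (h2 i)) hinv
        _ = δ n k * ((n:ℝ)⁻¹ * ∑ i ∈ Finset.range n, H (X i ω))
            + Kn n * ((n:ℝ)⁻¹ * ∑ i ∈ Finset.range n, ψ k (X i ω)) := by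
            rw [Finset.sum_add_distrib, ← Finset.mul_sum, ← Finset.mul_sum]
            ring
    · have habs : (∑' x, q0 x * |H x|) = ∑' x, q0 x * H x :=
        tsum_congr fun x => by rw [abs_of_nonneg (hHnn x)]
      rw [habs]
      exact h4
    · intro k n; exact mul_nonneg (by positivity) (Finset.sum_nonneg fun i _ => hψ0 k _)
    · intro n; exact mul_nonneg (by positivity) (Finset.sum_nonneg fun i _ => hHnn _)
  -- conclusion
  have hg3 : Tendsto (fun n : ℕ => (n:ℝ)⁻¹ * ∑ i ∈ Finset.range n, g (X i ω))
      atTop (𝓝 (Lpop θ)) := by rw [hpop]; exact h3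
  have := hg3.sub herr
  rw [sub_zero] at this
  exact this.congr fun n => (hdecomp n).symm
end

section
/- Let 𝒳 = S^d be the set of configurations of a lattice with d sites and finite state set S, let the matching set be M(x) := {x' : x'_{−k} = x_{−k} and x'_k = s for some s ∈ S \ {x_k}, k = 1,…,d} (so |M(x)| = d(|S|−1)), and suppose q0 satisfies the Markov property q0(x_k | x_{−k}) = q0(x_k | nb(x_k)) for every site k, and stationarity (the conditional distribution of a site's state given its neighbourhood is the same at every site). Suppose the model p_θ is a Markov random field with the same neighbourhood structure, so that for x' ∈ M(x) differing from x only at site k, log(p_θ(x')/p_θ(x)) depends only on (x'_k, x_k, nb(x_k)) and equals log(p_θ(x'_k | nb(x_k))/p_θ(x_k | nb(x_k))). Then the population LRM loss reduces to a single-site expectation: L(θ) = E_{(x, nb(x))∼q0}[(1/(|S|−1)) Σ_{x'∈S, x'≠x} (log(p_θ(x' | nb(x))/p_θ(x | nb(x))))² − 2 log(p_θ(x' | nb(x))/p_θ(x | nb(x))) log(q0(x' | nb(x))/q0(x | nb(x)))], where (x, nb(x)) denotes the state and neighbourhood of a single site. -/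
/-- For a Markov random field on a lattice with `d` sites, finite state
space `S`, matching set given by all single-site state changes, a data-generating PMF `q0`
satisfying the Markov property and stationarity, and a model `p_θ` whose single-site
log-ratios depend only on the site's state and its neighbourhood, the population LRM loss
reduces to a single-site expectation. -/
theorem lrm_loss_single_site_reduction
    {S : Type*} [Fintype S] [DecidableEq S] {d c : ℕ} (hd : 0 < d) (hS : 2 ≤ Fintype.card S)
    {Θ : Type*}
    -- each site k has c neighbours, nb k 0, …, nb k (c-1), none equal to k itself
    (nb : Fin d → Fin c → Fin d) (hnb : ∀ k j, nb k j ≠ k)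
    -- the data-generating PMF q0, strictly positive
    (q0 : (Fin d → S) → ℝ) (hq0_pos : ∀ x, 0 < q0 x) (hq0_sum : ∑ x : Fin d → S, q0 x = 1)
    -- the model family, strictly positive
    (pθ : Θ → (Fin d → S) → ℝ) (hpθ_pos : ∀ θ x, 0 < pθ θ x)
    -- single-site conditional distributions of the model and of q0, both positive
    (Pcond : Θ → S → (Fin c → S) → ℝ) (hPcond_pos : ∀ θ s v, 0 < Pcond θ s v)
    (Q : S → (Fin c → S) → ℝ) (hQ_pos : ∀ s v, 0 < Q s v)
    -- the model is a Markov random field: its single-site ratios depend only on the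
    -- site's state and its neighbourhood, through the conditional Pcond
    (hmodel : ∀ θ (x : Fin d → S) (k : Fin d) (s : S),
      pθ θ (Function.update x k s) / pθ θ x
        = Pcond θ s (fun j => x (nb k j)) / Pcond θ (x k) (fun j => x (nb k j)))
    -- q0 satisfies the Markov property: its single-site ratios depend only on the
    -- site's state and its neighbourhood, through the conditional Q
    (hq0_markov : ∀ (x : Fin d → S) (k : Fin d) (s : S),
      q0 (Function.update x k s) / q0 x
        = Q s (fun j => x (nb k j)) / Q (x k) (fun j => x (nb k j)))
    -- stationarity: the joint distribution of a site's state and its neighbourhood states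
    -- is the same at every site, with common PMF r
    (r : S → (Fin c → S) → ℝ)
    (hstat : ∀ (k : Fin d) (s : S) (v : Fin c → S),
      (∑ x : Fin d → S, if x k = s ∧ (fun j => x (nb k j)) = v then q0 x else 0) = r s v)
    -- the population LRM loss for the single-site-flip matching set,
    -- with |M(x)| = d(|S|−1)
    (L : Θ → ℝ)
    (hL : ∀ θ, L θ = ∑ x : Fin d → S, q0 x *
      ((1 / ((d : ℝ) * ((Fintype.card S : ℝ) - 1))) *
        ∑ k : Fin d, ∑ s ∈ Finset.univ.erase (x k),
          ((Real.log (pθ θ (Function.update x k s) / pθ θ x)) ^ 2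
            - 2 * Real.log (pθ θ (Function.update x k s) / pθ θ x)
                * Real.log (q0 (Function.update x k s) / q0 x)))) :
    -- conclusion: the loss reduces to a single-site expectation
    ∀ θ, L θ = ∑ s : S, ∑ v : Fin c → S, r s v *
      ((1 / ((Fintype.card S : ℝ) - 1)) *
        ∑ s' ∈ Finset.univ.erase s,
          ((Real.log (Pcond θ s' v / Pcond θ s v)) ^ 2
            - 2 * Real.log (Pcond θ s' v / Pcond θ s v)
                * Real.log (Q s' v / Q s v))) := by
  intro θ
  have hm : (Fintype.card S : ℝ) - 1 ≠ 0 := by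
    have : (2:ℝ) ≤ (Fintype.card S : ℝ) := by exact_mod_cast hS
    linarith
  have hdne : (d:ℝ) ≠ 0 := Nat.cast_ne_zero.mpr hd.ne'
  rw [hL]
  set G : S → (Fin c → S) → ℝ := fun s v =>
    ∑ s' ∈ Finset.univ.erase s,
      ((Real.log (Pcond θ s' v / Pcond θ s v)) ^ 2
        - 2 * Real.log (Pcond θ s' v / Pcond θ s v) * Real.log (Q s' v / Q s v)) with hG
  have key : ∀ (x : Fin d → S) (k : Fin d),
      (∑ s ∈ Finset.univ.erase (x k),
        ((Real.log (pθ θ (Function.update x k s) / pθ θ x)) ^ 2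
          - 2 * Real.log (pθ θ (Function.update x k s) / pθ θ x)
              * Real.log (q0 (Function.update x k s) / q0 x)))
      = G (x k) (fun j => x (nb k j)) := by
    intro x k
    rw [hG]
    apply Finset.sum_congr rfl
    intro s _
    rw [hmodel, hq0_markov]
  have hk : ∀ k : Fin d,
      (∑ x : Fin d → S, q0 x * G (x k) (fun j => x (nb k j)))
      = ∑ s : S, ∑ v : Fin c → S, r s v * G s v := by
    intro k
    have h1 : ∀ (s : S) (v : Fin c → S), r s v * G s v
        = ∑ x : Fin d → S,
            (if x k = s ∧ (fun j => x (nb k j)) = v then q0 x * G s v else 0) := by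
      intro s v
      rw [← hstat k s v, Finset.sum_mul]
      apply Finset.sum_congr rfl
      intro x _
      split <;> simp
    have h2 : ∀ x : Fin d → S, q0 x * G (x k) (fun j => x (nb k j))
        = ∑ s : S, ∑ v : Fin c → S,
            (if x k = s ∧ (fun j => x (nb k j)) = v then q0 x * G s v else 0) := by
      intro x
      rw [Finset.sum_eq_single (x k)]
      · rw [Finset.sum_eq_single (fun j => x (nb k j))]
        · simp
        · intro v _ hv
          simp [Ne.symm hv]
        · simp
      · intro s _ hs
        apply Finset.sum_eq_zero
        intro v _
        simp [Ne.symm hs]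
      · simp
    rw [Finset.sum_congr rfl fun x _ => h2 x, Finset.sum_comm]
    exact Finset.sum_congr rfl fun s _ => Finset.sum_comm.trans
      (Finset.sum_congr rfl fun v _ => (h1 s v).symm)
  simp_rw [key]
  have hx : ∀ x : Fin d → S,
      q0 x * ((1 / ((d : ℝ) * ((Fintype.card S : ℝ) - 1))) *
        ∑ k : Fin d, G (x k) (fun j => x (nb k j)))
      = ∑ k : Fin d, (1 / ((d : ℝ) * ((Fintype.card S : ℝ) - 1))) *
          (q0 x * G (x k) (fun j => x (nb k j))) := by
    intro x
    rw [Finset.mul_sum, Finset.mul_sum]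
    exact Finset.sum_congr rfl fun k _ => by ring
  rw [Finset.sum_congr rfl fun x _ => hx x, Finset.sum_comm]
  have step1 : ∀ k : Fin d,
      (∑ x : Fin d → S, (1 / ((d : ℝ) * ((Fintype.card S : ℝ) - 1))) *
        (q0 x * G (x k) (fun j => x (nb k j))))
      = (1 / ((d : ℝ) * ((Fintype.card S : ℝ) - 1))) *
          ∑ s : S, ∑ v : Fin c → S, r s v * G s v := by
    intro k
    rw [← Finset.mul_sum, hk k]
  rw [Finset.sum_congr rfl fun k _ => step1 k, Finset.sum_const, Finset.card_univ,
    Fintype.card_fin, nsmul_eq_mul]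
  have step2 : (∑ s : S, ∑ v : Fin c → S, r s v *
      ((1 / ((Fintype.card S : ℝ) - 1)) * G s v))
      = (1 / ((Fintype.card S : ℝ) - 1)) * ∑ s : S, ∑ v : Fin c → S, r s v * G s v := by
    rw [Finset.mul_sum]
    apply Finset.sum_congr rfl
    intro s _
    rw [Finset.mul_sum]
    exact Finset.sum_congr rfl fun v _ => by ring
  rw [step2]
  field_simp
end
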